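/- arXiv:2509.04004 — 2 statements merged into one kernel-verified Lean document; each statement's English description precedes it below -/
import Mathlib

section
/- In a rotationally asymmetric configuration of finitely many distinct points on a circle, if there are two undecided leaders L (the true leader) and r, then the first clockwise neighbors of L and of r are not antipodal to each other. -/
open Real
open scoped Classical

noncomputable section

/-- Clockwise angular distance from `p` to `q`, a real number in `[0, 2π)`. -/
def cw (p q : Real.Angle) : ℝ :=
  if 0 ≤ (q - p).toReal then (q - p).toReal else (q - p).toReal + 2 * π

/-- The sorted list of clockwise distances from `p` to the points of `S`. -/
def dists (S : Finset Real.Angle) (p : Real.Angle) : List ℝ :=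
  (S.image (cw p)).sort (· ≤ ·)

/-- The clockwise angular-gap sequence of `p` with respect to the configuration `S`:
the sequence of clockwise gaps between consecutive points, starting from `p`. -/
def gapSeq (S : Finset Real.Angle) (p : Real.Angle) : List ℝ :=
  List.zipWith (fun a b => a - b) ((dists S p).tail ++ [2 * π]) (dists S p)

/-- Lexicographic strict order on lists of reals. -/
def lexLt (a b : List ℝ) : Prop := List.Lex (· < ·) a b

/-- `L` is the true leader of `S`: its angular-gap sequence is lexicographically
strictly smallest. -/
def TrueLeader (S : Finset Real.Angle) (L : Real.Angle) : Prop :=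
  L ∈ S ∧ ∀ r ∈ S, r ≠ L → lexLt (gapSeq S L) (gapSeq S r)

/-- `S` is rotationally asymmetric: no nontrivial rotation about the center fixes `S`. -/
def RotAsym (S : Finset Real.Angle) : Prop :=
  ∀ θ : Real.Angle, θ ≠ 0 → S.image (· + θ) ≠ S

/-- The antipodal position of a point on the circle. -/
def antipode (p : Real.Angle) : Real.Angle := p + (π : Real.Angle)

/-- The hypothetical configuration in which the antipode of `r` is unoccupied. -/
def C0 (S : Finset Real.Angle) (r : Real.Angle) : Finset Real.Angle := S.erase (antipode r)

/-- The hypothetical configuration in which the antipode of `r` is occupied. -/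
def C1 (S : Finset Real.Angle) (r : Real.Angle) : Finset Real.Angle := insert (antipode r) S

/-- `r` is an undecided leader: both hypothetical configurations are rotationally
asymmetric and `r` is the true leader of exactly one of them. -/
def Undecided (S : Finset Real.Angle) (r : Real.Angle) : Prop :=
  r ∈ S ∧ RotAsym (C0 S r) ∧ RotAsym (C1 S r) ∧
    Xor' (TrueLeader (C0 S r) r) (TrueLeader (C1 S r) r)

/-- `r` is a cognizant leader: `r` is the true leader in every consistent
(hypothetical) configuration. -/
def Cognizant (S : Finset Real.Angle) (r : Real.Angle) : Prop :=
  r ∈ S ∧ (RotAsym (C0 S r) → TrueLeader (C0 S r) r) ∧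
    (RotAsym (C1 S r) → TrueLeader (C1 S r) r)

/-- An expected leader is a cognizant leader or an undecided leader. -/
def ExpectedLeader (S : Finset Real.Angle) (r : Real.Angle) : Prop :=
  Cognizant S r ∨ Undecided S r

/-- `q` is the first clockwise neighbor of `p` in `S`. -/
def IsCwNbr (S : Finset Real.Angle) (p q : Real.Angle) : Prop :=
  q ∈ S ∧ q ≠ p ∧ ∀ x ∈ S, x ≠ p → cw p q ≤ cw p x

namespace Stmt12Aux

lemma two_pi_pos : (0:ℝ) < 2*π := by positivity

lemma cw_nonneg (p q : Real.Angle) : 0 ≤ cw p q := by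
  unfold cw; split_ifs with h
  · exact h
  · have := Real.Angle.neg_pi_lt_toReal (q - p)
    have := Real.pi_pos
    linarith

lemma cw_lt_two_pi (p q : Real.Angle) : cw p q < 2*π := by
  unfold cw; split_ifs with h
  · have := Real.Angle.toReal_le_pi (q - p)
    have := Real.pi_pos
    linarith
  · push_neg at h
    linarith

lemma coe_cw (p q : Real.Angle) : ((cw p q : ℝ) : Real.Angle) = q - p := by
  unfold cw; split_ifs with h
  · exact (q - p).coe_toReal
  · rw [Real.Angle.coe_add, Real.Angle.coe_two_pi, add_zero]
    exact (q - p).coe_toReal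

lemma coe_inj_Ico {c d : ℝ} (hc0 : 0 ≤ c) (hc1 : c < 2*π) (hd0 : 0 ≤ d) (hd1 : d < 2*π)
    (h : (c : Real.Angle) = d) : c = d := by
  obtain ⟨k, hk⟩ := Real.Angle.angle_eq_iff_two_pi_dvd_sub.mp h
  have hπ := Real.pi_pos
  have h1 : (2*(k:ℝ)) * π < 2 * π := by nlinarith
  have h2 : (-2) * π < (2*(k:ℝ)) * π := by nlinarith
  have h1' : (2*(k:ℝ)) < 2 := lt_of_mul_lt_mul_right h1 hπ.le
  have h2' : (-2:ℝ) < 2*(k:ℝ) := lt_of_mul_lt_mul_right h2 hπ.le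
  have h1'' : 2*k < 2 := by exact_mod_cast h1'
  have h2'' : -2 < 2*k := by exact_mod_cast h2'
  have : k = 0 := by omega
  rw [this] at hk; push_cast at hk; linarith

lemma cw_eq_of {p q : Real.Angle} {c : ℝ} (h0 : 0 ≤ c) (h1 : c < 2*π)
    (h : (c : Real.Angle) = q - p) : cw p q = c :=
  coe_inj_Ico (cw_nonneg p q) (cw_lt_two_pi p q) h0 h1 (by rw [coe_cw, h])

lemma cw_self (p : Real.Angle) : cw p p = 0 := by
  apply cw_eq_of le_rfl two_pi_pos
  simp

lemma cw_eq_zero_iff {p q : Real.Angle} : cw p q = 0 ↔ q = p := by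
  constructor
  · intro h
    have := coe_cw p q
    rw [h] at this
    simp only [Real.Angle.coe_zero] at this
    have : q - p = 0 := this.symm
    exact sub_eq_zero.mp this
  · rintro rfl; exact cw_self _

lemma cw_pos_of_ne {p q : Real.Angle} (h : q ≠ p) : 0 < cw p q := by
  rcases (cw_nonneg p q).eq_or_lt with h0 | h0
  · exact absurd (cw_eq_zero_iff.mp h0.symm) h
  · exact h0

lemma cw_injective (p : Real.Angle) : Function.Injective (cw p) := by
  intro q q' h
  have h1 := coe_cw p q
  have h2 := coe_cw p q'
  rw [h] at h1
  rw [h1] at h2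
  exact sub_left_injective h2

lemma cw_rev {p q : Real.Angle} (h : q ≠ p) : cw q p = 2*π - cw p q := by
  have h1 : 0 < cw p q := cw_pos_of_ne h
  have h2 : cw p q < 2*π := cw_lt_two_pi p q
  apply cw_eq_of (by linarith) (by linarith)
  rw [Real.Angle.coe_sub, Real.Angle.coe_two_pi, coe_cw]
  abel


/-- Distances to the *other* points. -/
def Mset (T : Finset Real.Angle) (p : Real.Angle) : Finset ℝ := (T.erase p).image (cw p)

lemma mem_Mset {T : Finset Real.Angle} {p : Real.Angle} {z : ℝ} :
    z ∈ Mset T p ↔ ∃ x, x ∈ T ∧ x ≠ p ∧ cw p x = z := by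
  simp only [Mset, Finset.mem_image, Finset.mem_erase]
  constructor
  · rintro ⟨x, ⟨hxp, hxT⟩, hx⟩; exact ⟨x, hxT, hxp, hx⟩
  · rintro ⟨x, hxT, hxp, hx⟩; exact ⟨x, ⟨hxp, hxT⟩, hx⟩

lemma Mset_pos {T : Finset Real.Angle} {p : Real.Angle} {z : ℝ} (h : z ∈ Mset T p) :
    0 < z ∧ z < 2*π := by
  obtain ⟨x, _, hxp, rfl⟩ := mem_Mset.mp h
  exact ⟨cw_pos_of_ne hxp, cw_lt_two_pi p x⟩

/-- `A` beats `B` lexicographically (as sorted distance sets). -/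
def Win (A B : Finset ℝ) : Prop :=
  ∃ z, z ∈ A ∧ z ∉ B ∧ ∀ w, w < z → (w ∈ A ↔ w ∈ B)

lemma win_asymm {A B : Finset ℝ} (h1 : Win A B) (h2 : Win B A) : False := by
  obtain ⟨z, hzA, hzB, hag⟩ := h1
  obtain ⟨z', hz'B, hz'A, hag'⟩ := h2
  rcases lt_trichotomy z z' with h | h | h
  · exact hzB ((hag' z h).mpr hzA)
  · exact hz'A (h ▸ hzA)
  · exact hz'A ((hag z' h).mpr hz'B)

lemma win_exists_le {A B : Finset ℝ} (h : Win A B) {γ : ℝ} (hγ : γ ∈ B) :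
    ∃ α ∈ A, α ≤ γ := by
  obtain ⟨z, hzA, hzB, hag⟩ := h
  rcases le_or_gt z γ with hle | hlt
  · exact ⟨z, hzA, hle⟩
  · exact ⟨γ, (hag γ hlt).mpr hγ, le_rfl⟩

lemma sorted_head_le {a z : ℝ} {t : List ℝ} (hs : (a :: t).Pairwise (· < ·)) (hz : z ∈ a :: t) :
    a ≤ z := by
  rcases List.mem_cons.mp hz with rfl | hz
  · exact le_rfl
  · exact (List.rel_of_pairwise_cons hs hz).le

lemma not_mem_of_lt_head {a z : ℝ} {t : List ℝ} (hs : (a :: t).Pairwise (· < ·)) (hz : z < a) :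
    z ∉ a :: t := fun hmem => absurd (sorted_head_le hs hmem) (not_le.mpr hz)

lemma lex_iff_win_list :
    ∀ (l l' : List ℝ), l.Pairwise (· < ·) → l'.Pairwise (· < ·) → l.length = l'.length →
      (List.Lex (· < ·) l l' ↔ ∃ z, z ∈ l ∧ z ∉ l' ∧ ∀ w, w < z → (w ∈ l ↔ w ∈ l'))
  | [], [], _, _, _ => by
      constructor
      · intro h; exact absurd h List.not_lex_nil
      · rintro ⟨z, hz, -, -⟩; simp at hz
  | [], b :: t', _, _, h => by simp at h
  | a :: t, [], _, _, h => by simp at h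
  | a :: t, b :: t', hs, hs', h => by
      have hst : t.Pairwise (· < ·) := hs.of_cons
      have hst' : t'.Pairwise (· < ·) := hs'.of_cons
      have hlen : t.length = t'.length := by simpa using h
      rcases lt_trichotomy a b with hab | hab | hab
      · constructor
        · intro _
          refine ⟨a, List.mem_cons_self, not_mem_of_lt_head hs' hab, fun w hw => ?_⟩
          have h1 : w ∉ a :: t := not_mem_of_lt_head hs hw
          have h2 : w ∉ b :: t' := not_mem_of_lt_head hs' (hw.trans hab)
          exact iff_of_false h1 h2
        · intro _; exact List.Lex.rel hab
      · subst hab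
        rw [List.lex_cons_iff, lex_iff_win_list t t' hst hst' hlen]
        constructor
        · rintro ⟨z, hz, hz', hag⟩
          have hza : a < z := List.rel_of_pairwise_cons hs hz
          refine ⟨z, List.mem_cons_of_mem a hz, ?_, fun w hw => ?_⟩
          · intro hmem
            rcases List.mem_cons.mp hmem with rfl | h2
            · exact lt_irrefl _ hza
            · exact hz' h2
          · rcases eq_or_ne w a with rfl | hwa
            · exact iff_of_true (List.mem_cons_self) (List.mem_cons_self)
            · constructor
              · intro h1
                rcases List.mem_cons.mp h1 with rfl | h2
                · exact absurd rfl hwa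
                · exact List.mem_cons_of_mem a ((hag w hw).mp h2)
              · intro h1
                rcases List.mem_cons.mp h1 with rfl | h2
                · exact absurd rfl hwa
                · exact List.mem_cons_of_mem a ((hag w hw).mpr h2)
        · rintro ⟨z, hz, hz', hag⟩
          have hz2 : z ∈ t := by
            rcases List.mem_cons.mp hz with rfl | h2
            · exact absurd (List.mem_cons_self) hz'
            · exact h2
          refine ⟨z, hz2, fun hmem => hz' (List.mem_cons_of_mem a hmem), fun w hw => ?_⟩
          have := hag w hw
          constructor
          · intro hw1
            rcases List.mem_cons.mp (this.mp (List.mem_cons_of_mem a hw1)) with rfl | h2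
            · exact absurd (List.rel_of_pairwise_cons hs hw1) (lt_irrefl _)
            · exact h2
          · intro hw1
            rcases List.mem_cons.mp (this.mpr (List.mem_cons_of_mem a hw1)) with rfl | h2
            · exact absurd (List.rel_of_pairwise_cons hs' hw1) (lt_irrefl _)
            · exact h2
      · constructor
        · intro hlex
          exfalso
          cases hlex with
          | rel h' => exact absurd hab (not_lt.mpr h'.le)
          | cons h' => exact lt_irrefl _ hab
        · rintro ⟨z, hz, hz', hag⟩
          exfalso
          have hbz : b < z := lt_of_lt_of_le hab (sorted_head_le hs hz)
          have : b ∈ a :: t := (hag b hbz).mpr (List.mem_cons_self)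
          exact absurd (sorted_head_le hs this) (not_le.mpr hab)

lemma not_lex_of_gt {x y : ℝ} {u v : List ℝ} (h : y < x) :
    ¬ List.Lex (· < ·) (x :: u) (y :: v) := by
  intro hl
  cases hl with
  | rel h' => exact absurd h (not_lt.mpr h'.le)
  | cons h' => exact lt_irrefl _ h

lemma lex_zip_iff :
    ∀ (l l' : List ℝ), l.length = l'.length → ∀ (a c : ℝ),
      (List.Lex (· < ·) (List.zipWith (fun x y => x - y) (l ++ [c]) (a :: l))
        (List.zipWith (fun x y => x - y) (l' ++ [c]) (a :: l')) ↔ List.Lex (· < ·) l l')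
  | [], [], _, a, c => by
      simp only [List.nil_append, List.zipWith_cons_cons, List.zipWith_nil_right,
        List.zipWith]
      constructor
      · intro h
        cases h with
        | rel h' => exact absurd h' (lt_irrefl _)
        | cons h' => exact absurd h' List.not_lex_nil
      · intro h; exact absurd h List.not_lex_nil
  | [], b :: t, h, _, _ => by simp at h
  | b :: t, [], h, _, _ => by simp at h
  | b :: t, b' :: t', h, a, c => by
      have hlen : t.length = t'.length := by simpa using h
      have e1 : List.zipWith (fun x y => x - y) ((b :: t) ++ [c]) (a :: b :: t)
          = (b - a) :: List.zipWith (fun x y => x - y) (t ++ [c]) (b :: t) := by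
        simp [List.cons_append]
      have e2 : List.zipWith (fun x y => x - y) ((b' :: t') ++ [c]) (a :: b' :: t')
          = (b' - a) :: List.zipWith (fun x y => x - y) (t' ++ [c]) (b' :: t') := by
        simp [List.cons_append]
      rw [e1, e2]
      rcases lt_trichotomy b b' with hbb | hbb | hbb
      · exact iff_of_true (List.Lex.rel (by linarith)) (List.Lex.rel hbb)
      · subst hbb
        rw [List.lex_cons_iff, List.lex_cons_iff]
        exact lex_zip_iff t t' hlen b c
      · exact iff_of_false (not_lex_of_gt (by linarith)) (not_lex_of_gt hbb)

lemma dists_eq {T : Finset Real.Angle} {p : Real.Angle} (hp : p ∈ T) :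
    dists T p = 0 :: (Mset T p).sort (· ≤ ·) := by
  unfold dists
  have h1 : T.image (cw p) = insert 0 (Mset T p) := by
    conv_lhs => rw [← Finset.insert_erase hp]
    rw [Finset.image_insert, cw_self]
    rfl
  rw [h1]
  exact Finset.sort_insert (· ≤ ·) (fun b hb => (Mset_pos hb).1.le)
    (fun hmem => absurd (Mset_pos hmem).1 (lt_irrefl 0))

lemma length_sort_Mset {T : Finset Real.Angle} {p : Real.Angle} (hp : p ∈ T) :
    ((Mset T p).sort (· ≤ ·)).length = T.card - 1 := by
  rw [Finset.length_sort, Mset, Finset.card_image_of_injective _ (cw_injective p),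
    Finset.card_erase_of_mem hp]

lemma lexLt_iff_win {T : Finset Real.Angle} {p q : Real.Angle} (hp : p ∈ T) (hq : q ∈ T) :
    lexLt (gapSeq T p) (gapSeq T q) ↔ Win (Mset T p) (Mset T q) := by
  have hlen : ((Mset T p).sort (· ≤ ·)).length = ((Mset T q).sort (· ≤ ·)).length := by
    rw [length_sort_Mset hp, length_sort_Mset hq]
  unfold lexLt gapSeq
  rw [dists_eq hp, dists_eq hq]
  simp only [List.tail_cons]
  rw [lex_zip_iff _ _ hlen 0 (2*π),
    lex_iff_win_list _ _ (List.sortedLT_iff_pairwise.mp (Finset.sortedLT_sort _)) (List.sortedLT_iff_pairwise.mp (Finset.sortedLT_sort _)) hlen]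
  unfold Win
  simp only [Finset.mem_sort]


lemma trueLeader_iff {T : Finset Real.Angle} {p : Real.Angle} :
    TrueLeader T p ↔ p ∈ T ∧ ∀ x ∈ T, x ≠ p → Win (Mset T p) (Mset T x) := by
  unfold TrueLeader
  constructor
  · rintro ⟨hp, h⟩
    exact ⟨hp, fun x hx hxp => (lexLt_iff_win hp hx).mp (h x hx hxp)⟩
  · rintro ⟨hp, h⟩
    exact ⟨hp, fun x hx hxp => (lexLt_iff_win hp hx).mpr (h x hx hxp)⟩


lemma cw_antipode (p : Real.Angle) : cw p (antipode p) = π := by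
  have hπ := Real.pi_pos
  apply cw_eq_of hπ.le (by linarith)
  show _ = antipode p - p
  rw [antipode]
  abel

lemma ne_antipode (p : Real.Angle) : p ≠ antipode p := by
  intro h
  have h1 := cw_antipode p
  rw [← h, cw_self] at h1
  exact Real.pi_ne_zero h1.symm

lemma witness_lt_pi {S : Finset Real.Angle} {L x : Real.Angle}
    (hlead : ∀ y ∈ S, y ≠ L → Win (Mset S L) (Mset S y))
    (hLS : L ∈ S)
    (hx : x ∈ S) (hxL : x ≠ L) (hgt : π < cw x (antipode L))
    {z : ℝ} (hzA : z ∈ Mset S L) (hzB : z ∉ Mset S x)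
    (hag : ∀ w, w < z → (w ∈ Mset S L ↔ w ∈ Mset S x)) :
    z < π := by
  by_contra hzπ
  push_neg at hzπ
  have hπ := Real.pi_pos
  set m := antipode L with hm
  set dB := cw x m with hdBdef
  set δ := dB - π with hδdef
  have hδ0 : 0 < δ := by simp only [hδdef]; linarith
  have hδπ : δ < π := by have := cw_lt_two_pi x m; simp only [hδdef]; linarith
  obtain ⟨hz0, hz2⟩ := Mset_pos hzA
  -- cw x L = δ
  have hxLd : cw x L = δ := by
    apply cw_eq_of (by linarith) (by linarith)
    rw [hδdef, Real.Angle.coe_sub, coe_cw]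
    show (m : Real.Angle) - x - π = L - x
    rw [hm, antipode]
    abel
  have hδB : δ ∈ Mset S x := mem_Mset.mpr ⟨L, hLS, Ne.symm hxL, hxLd⟩
  have hδz : δ < z := lt_of_lt_of_le hδπ hzπ
  have hδA : δ ∈ Mset S L := (hag δ hδz).mpr hδB
  obtain ⟨w₁, hw₁S, hw₁L, hw₁d⟩ := mem_Mset.mp hδA
  obtain ⟨y, hyS, hyL, hyd⟩ := mem_Mset.mp hzA
  -- coe facts
  have cδ : ((δ : ℝ) : Real.Angle) = w₁ - L := by rw [← hw₁d]; exact coe_cw L w₁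
  have cz : ((z : ℝ) : Real.Angle) = y - L := by rw [← hyd]; exact coe_cw L y
  have cδx : ((δ : ℝ) : Real.Angle) = L - x := by rw [← hxLd]; exact coe_cw x L
  have hzdB1 : z - δ ∈ Mset S w₁ := by
    have hcw : cw w₁ y = z - δ := by
      apply cw_eq_of (by linarith) (by linarith)
      rw [Real.Angle.coe_sub, cz, cδ]; abel
    refine mem_Mset.mpr ⟨y, hyS, ?_, hcw⟩
    intro h
    rw [h] at hyd
    rw [hw₁d] at hyd
    linarith
  have hzdA : z - δ ∉ Mset S L := by
    rintro h
    obtain ⟨u, huS, huL, hud⟩ := mem_Mset.mp h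
    have hcu : ((z - δ : ℝ) : Real.Angle) = u - L := by rw [← hud]; exact coe_cw L u
    have hcw : cw x u = z := by
      apply cw_eq_of (by linarith) (by linarith)
      have : ((z : ℝ) : Real.Angle) = ((z - δ : ℝ) : Real.Angle) + ((δ : ℝ) : Real.Angle) := by
        rw [← Real.Angle.coe_add]; norm_num
      rw [this, hcu, cδx]; abel
    refine hzB (mem_Mset.mpr ⟨u, huS, ?_, hcw⟩)
    intro h
    rw [h, cw_self] at hcw
    linarith
  obtain ⟨z₁, hz₁A, hz₁B₁, hag₁⟩ := hlead w₁ hw₁S hw₁L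
  have hagree : ∀ w, w < z - δ → (w ∈ Mset S L ↔ w ∈ Mset S w₁) := by
    intro w hw
    rcases le_or_gt w 0 with hw0 | hw0
    · exact iff_of_false (fun h => absurd (Mset_pos h).1 (not_lt.mpr hw0))
        (fun h => absurd (Mset_pos h).1 (not_lt.mpr hw0))
    · have hwz : w + δ < z := by linarith
      have h1 : w ∈ Mset S w₁ ↔ w + δ ∈ Mset S L := by
        constructor
        · rintro hmem
          obtain ⟨v, hvS, hvw, hvd⟩ := mem_Mset.mp hmem
          have hcv : ((w : ℝ) : Real.Angle) = v - w₁ := by rw [← hvd]; exact coe_cw w₁ v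
          have hcw : cw L v = w + δ := by
            apply cw_eq_of (by linarith) (by linarith)
            rw [Real.Angle.coe_add, hcv, cδ]; abel
          refine mem_Mset.mpr ⟨v, hvS, ?_, hcw⟩
          intro h; rw [h, cw_self] at hcw; linarith
        · rintro hmem
          obtain ⟨u, huS, huL, hud⟩ := mem_Mset.mp hmem
          have hcu : ((w + δ : ℝ) : Real.Angle) = u - L := by rw [← hud]; exact coe_cw L u
          have hcw : cw w₁ u = w := by
            apply cw_eq_of (by linarith) (by linarith)
            have : ((w : ℝ) : Real.Angle) = ((w + δ : ℝ) : Real.Angle) - ((δ : ℝ) : Real.Angle) := by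
              rw [← Real.Angle.coe_sub]; norm_num
            rw [this, hcu, cδ]; abel
          refine mem_Mset.mpr ⟨u, huS, ?_, hcw⟩
          intro h; rw [h, cw_self] at hcw; linarith
      have h2 : w + δ ∈ Mset S L ↔ w + δ ∈ Mset S x := hag (w + δ) hwz
      have h3 : w + δ ∈ Mset S x ↔ w ∈ Mset S L := by
        constructor
        · rintro hmem
          obtain ⟨v, hvS, hvx, hvd⟩ := mem_Mset.mp hmem
          have hcv : ((w + δ : ℝ) : Real.Angle) = v - x := by rw [← hvd]; exact coe_cw x v
          have hcw : cw L v = w := by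
            apply cw_eq_of (by linarith) (by linarith)
            have : ((w : ℝ) : Real.Angle) = ((w + δ : ℝ) : Real.Angle) - ((δ : ℝ) : Real.Angle) := by
              rw [← Real.Angle.coe_sub]; norm_num
            rw [this, hcv, cδx]; abel
          refine mem_Mset.mpr ⟨v, hvS, ?_, hcw⟩
          intro h; rw [h, cw_self] at hcw; linarith
        · rintro hmem
          obtain ⟨u, huS, huL, hud⟩ := mem_Mset.mp hmem
          have hcu : ((w : ℝ) : Real.Angle) = u - L := by rw [← hud]; exact coe_cw L u
          have hcw : cw x u = w + δ := by
            apply cw_eq_of (by linarith) (by linarith)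
            rw [Real.Angle.coe_add, hcu, cδx]; abel
          refine mem_Mset.mpr ⟨u, huS, ?_, hcw⟩
          intro h; rw [h, cw_self] at hcw; linarith
      rw [← h3, ← h2, h1]
  rcases lt_trichotomy z₁ (z - δ) with h | h | h
  · exact hz₁B₁ ((hagree z₁ h).mp hz₁A)
  · exact hzdA (h ▸ hz₁A)
  · exact hzdA ((hag₁ (z - δ) h).mpr hzdB1)

lemma erase_antipode_leader {S : Finset Real.Angle} {L : Real.Angle}
    (hL : TrueLeader S L) (hmS : antipode L ∈ S) :
    TrueLeader (S.erase (antipode L)) L := by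
  obtain ⟨hLS, hlead'⟩ := trueLeader_iff.mp hL
  have hπ := Real.pi_pos
  have hLm : L ≠ antipode L := ne_antipode L
  rw [trueLeader_iff]
  refine ⟨Finset.mem_erase.mpr ⟨hLm, hLS⟩, ?_⟩
  intro x hx hxL
  obtain ⟨hxm, hxS⟩ := Finset.mem_erase.mp hx
  have hMCL : Mset (S.erase (antipode L)) L = (Mset S L).erase (cw L (antipode L)) := by
    unfold Mset
    rw [Finset.erase_right_comm, Finset.image_erase (cw_injective L)]
  have hMCx : Mset (S.erase (antipode L)) x = (Mset S x).erase (cw x (antipode L)) := by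
    unfold Mset
    rw [Finset.erase_right_comm, Finset.image_erase (cw_injective x)]
  rw [hMCL, hMCx, cw_antipode]
  have hdBB : cw x (antipode L) ∈ Mset S x :=
    mem_Mset.mpr ⟨antipode L, hmS, Ne.symm hxm, rfl⟩
  obtain ⟨z, hzA, hzB, hag⟩ := hlead' x hxS hxL
  rcases lt_trichotomy (cw x (antipode L)) π with hlt | heq | hgt
  · rcases lt_or_ge (cw x (antipode L)) z with h1 | h1
    · refine ⟨cw x (antipode L), Finset.mem_erase.mpr ⟨hlt.ne, (hag _ h1).mpr hdBB⟩,
        fun hmem => (Finset.mem_erase.mp hmem).1 rfl, fun w hw => ?_⟩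
      simp only [Finset.mem_erase]
      constructor
      · rintro ⟨-, hwA⟩; exact ⟨hw.ne, (hag w (hw.trans h1)).mp hwA⟩
      · rintro ⟨-, hwB⟩; exact ⟨(hw.trans hlt).ne, (hag w (hw.trans h1)).mpr hwB⟩
    · have h2 : z < cw x (antipode L) := lt_of_le_of_ne h1 (fun h => hzB (h ▸ hdBB))
      refine ⟨z, Finset.mem_erase.mpr ⟨(h2.trans hlt).ne, hzA⟩,
        fun hmem => hzB (Finset.mem_erase.mp hmem).2, fun w hw => ?_⟩
      simp only [Finset.mem_erase]
      constructor
      · rintro ⟨-, hwA⟩; exact ⟨(hw.trans h2).ne, (hag w hw).mp hwA⟩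
      · rintro ⟨-, hwB⟩; exact ⟨(hw.trans (h2.trans hlt)).ne, (hag w hw).mpr hwB⟩
  · have hzπ : z ≠ π := fun h => hzB (h ▸ heq ▸ hdBB)
    refine ⟨z, Finset.mem_erase.mpr ⟨hzπ, hzA⟩,
      fun hmem => hzB (Finset.mem_erase.mp hmem).2, fun w hw => ?_⟩
    simp only [Finset.mem_erase, heq]
    constructor
    · rintro ⟨hwπ, hwA⟩; exact ⟨hwπ, (hag w hw).mp hwA⟩
    · rintro ⟨hwπ, hwB⟩; exact ⟨hwπ, (hag w hw).mpr hwB⟩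
  · have hzlt : z < π := witness_lt_pi hlead' hLS hxS hxL hgt hzA hzB hag
    refine ⟨z, Finset.mem_erase.mpr ⟨hzlt.ne, hzA⟩,
      fun hmem => hzB (Finset.mem_erase.mp hmem).2, fun w hw => ?_⟩
    simp only [Finset.mem_erase]
    constructor
    · rintro ⟨-, hwA⟩; exact ⟨(hw.trans (hzlt.trans hgt)).ne, (hag w hw).mp hwA⟩
    · rintro ⟨-, hwB⟩; exact ⟨(hw.trans hzlt).ne, (hag w hw).mpr hwB⟩

end Stmt12Aux

open Stmt12Aux in
theorem stmt12 (S : Finset Real.Angle) (hasym : RotAsym S)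
    (L r : Real.Angle) (hL : TrueLeader S L) (hrL : r ≠ L) (hr : r ∈ S)
    (hUL : Undecided S L) (hUr : Undecided S r)
    (n₁ n₂ : Real.Angle) (h1 : IsCwNbr S L n₁) (h2 : IsCwNbr S r n₂) :
    n₂ ≠ antipode n₁ := by
  intro hcontra
  obtain ⟨hn₁S, hn₁L, h1min⟩ := h1
  obtain ⟨hn₂S, hn₂r, h2min⟩ := h2
  have hπ := Real.pi_pos
  have hLS : L ∈ S := hL.1
  have hWhole : ∀ x ∈ S, x ≠ L → Win (Mset S L) (Mset S x) := (trueLeader_iff.mp hL).2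
  have ha0 : 0 < cw L r := cw_pos_of_ne hrL
  have ha2 : cw L r < 2*π := cw_lt_two_pi L r
  have hlam10 : 0 < cw L n₁ := cw_pos_of_ne hn₁L
  have hlam12 : cw L n₁ < 2*π := cw_lt_two_pi L n₁
  have hlam1a : cw L n₁ ≤ cw L r := h1min r hr hrL
  have hlam20 : 0 < cw r n₂ := cw_pos_of_ne hn₂r
  have hlam22 : cw r n₂ < 2*π := cw_lt_two_pi r n₂
  -- r is not the true leader of S
  have hTLr : ¬ TrueLeader S r := fun hTr =>
    win_asymm (hWhole r hr hrL) ((trueLeader_iff.mp hTr).2 L hLS (Ne.symm hrL))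
  -- key congruence
  have hang : ((cw L r + cw r n₂ : ℝ) : Real.Angle) = ((cw L n₁ + π : ℝ) : Real.Angle) := by
    rw [Real.Angle.coe_add, Real.Angle.coe_add, coe_cw L r, coe_cw r n₂, coe_cw L n₁,
      hcontra, antipode]
    abel
  obtain ⟨k, hk⟩ := Real.Angle.angle_eq_iff_two_pi_dvd_sub.mp hang
  have hkcases : k = -1 ∨ k = 0 ∨ k = 1 := by
    have e : 2*π*(k:ℝ) = (2*(k:ℝ))*π := by ring
    rw [e] at hk
    have hb1 : (2*(k:ℝ))*π < 3*π := by nlinarith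
    have hb2 : (-3)*π < (2*(k:ℝ))*π := by nlinarith
    have hb1' : (2*(k:ℝ)) < 3 := lt_of_mul_lt_mul_right hb1 hπ.le
    have hb2' : (-3:ℝ) < 2*(k:ℝ) := lt_of_mul_lt_mul_right hb2 hπ.le
    have hb1'' : 2*k < 3 := by exact_mod_cast hb1'
    have hb2'' : -3 < 2*k := by exact_mod_cast hb2'
    omega
  rcases hkcases with rfl | rfl | rfl
  · -- k = -1 : a + λ₂ = λ₁ - π, impossible
    push_cast at hk
    linarith
  · -- k = 0 : a + λ₂ = λ₁ + π
    push_cast at hk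
    have hkey : cw L r + cw r n₂ = cw L n₁ + π := by linarith
    rcases lt_trichotomy (cw L r) π with haπ | haπ | haπ
    · -- a < π : main case
      have hm₂π : cw r (antipode r) = π := cw_antipode r
      have hrm₂ : r ≠ antipode r := ne_antipode r
      have hLm₂ : cw L (antipode r) = cw L r + π := by
        apply cw_eq_of (by linarith) (by linarith)
        rw [Real.Angle.coe_add, coe_cw L r, antipode]
        abel
      have hLm₂ne : L ≠ antipode r := by
        intro h
        rw [← h, cw_self] at hLm₂
        linarith
      obtain ⟨-, -, -, hXor⟩ := hUr
      by_cases hmS : antipode r ∈ S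
      · -- consistent config is S.erase (antipode r)
        have hC1 : C1 S r = S := Finset.insert_eq_self.mpr hmS
        have hTr : TrueLeader (S.erase (antipode r)) r := by
          rcases hXor with ⟨hP, -⟩ | ⟨hQ, -⟩
          · exact hP
          · rw [hC1] at hQ; exact absurd hQ hTLr
        have hrC : r ∈ S.erase (antipode r) := Finset.mem_erase.mpr ⟨hrm₂, hr⟩
        have hLC : L ∈ S.erase (antipode r) := Finset.mem_erase.mpr ⟨hLm₂ne, hLS⟩
        have hWin := (trueLeader_iff.mp hTr).2 L hLC (Ne.symm hrL)
        rcases eq_or_lt_of_le hlam1a with heq | hlt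
        · -- λ₁ = a : n₁ = r, n₂ = antipode r
          have hn₁r : n₁ = r := cw_injective L heq
          have hn₂m : n₂ = antipode r := by rw [hcontra, hn₁r]
          have hlam2π : cw r n₂ = π := by rw [hn₂m]; exact hm₂π
          have haM : cw L r ∈ Mset (S.erase (antipode r)) L :=
            mem_Mset.mpr ⟨r, hrC, hrL, rfl⟩
          obtain ⟨α, hαM, hαle⟩ := win_exists_le hWin haM
          obtain ⟨u, huT, hur, hud⟩ := mem_Mset.mp hαM
          obtain ⟨hum, huS⟩ := Finset.mem_erase.mp huT
          have h3 : π ≤ α := by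
            rw [← hud, ← hlam2π]
            exact h2min u huS hur
          have h4 : α ≠ π := by
            intro h
            apply hum
            have : cw r u = cw r n₂ := by rw [hud, h, hlam2π]
            rw [← hn₂m]
            exact cw_injective r this
          linarith [lt_of_le_of_ne h3 (Ne.symm h4)]
        · -- λ₁ < a : λ₂ < π and n₂ ≠ antipode r
          have hlam2π : cw r n₂ < π := by linarith
          have hn₂m : n₂ ≠ antipode r := by
            intro h
            rw [h, hm₂π] at hlam2π
            exact lt_irrefl _ hlam2π
          have hn₁m : n₁ ≠ antipode r := by
            intro h
            rw [h, hLm₂] at hlam1a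
            linarith
          have hlam1M : cw L n₁ ∈ Mset (S.erase (antipode r)) L :=
            mem_Mset.mpr ⟨n₁, Finset.mem_erase.mpr ⟨hn₁m, hn₁S⟩, hn₁L, rfl⟩
          obtain ⟨α, hαM, hαle⟩ := win_exists_le hWin hlam1M
          obtain ⟨u, huT, hur, hud⟩ := mem_Mset.mp hαM
          obtain ⟨hum, huS⟩ := Finset.mem_erase.mp huT
          have h3 : cw r n₂ ≤ α := by rw [← hud]; exact h2min u huS hur
          linarith
      · -- consistent config is insert (antipode r) S
        have hC0 : C0 S r = S := Finset.erase_eq_of_notMem hmS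
        have hTr : TrueLeader (insert (antipode r) S) r := by
          rcases hXor with ⟨hP, -⟩ | ⟨hQ, -⟩
          · rw [C0] at hP
            rw [Finset.erase_eq_of_notMem hmS] at hP
            exact absurd hP hTLr
          · exact hQ
        have hLC : L ∈ insert (antipode r) S := Finset.mem_insert_of_mem hLS
        have hWin := (trueLeader_iff.mp hTr).2 L hLC (Ne.symm hrL)
        have hlt : cw L n₁ < cw L r := by
          rcases eq_or_lt_of_le hlam1a with heq | hlt
          · exfalso
            apply hmS
            have hn₁r : n₁ = r := cw_injective L heq
            rw [← hn₁r, ← hcontra]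
            exact hn₂S
          · exact hlt
        have hlam2π : cw r n₂ < π := by linarith
        have hlam1M : cw L n₁ ∈ Mset (insert (antipode r) S) L :=
          mem_Mset.mpr ⟨n₁, Finset.mem_insert_of_mem hn₁S, hn₁L, rfl⟩
        obtain ⟨α, hαM, hαle⟩ := win_exists_le hWin hlam1M
        obtain ⟨u, huT, hur, hud⟩ := mem_Mset.mp hαM
        rcases Finset.mem_insert.mp huT with rfl | huS
        · rw [← hud, hm₂π] at hαle
          linarith
        · have h3 : cw r n₂ ≤ α := by rw [← hud]; exact h2min u huS hur
          linarith
    · -- a = π : r = antipode L, use the erasure lemma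
      have hrant : r = antipode L := by
        have hc : ((π:ℝ) : Real.Angle) = r - L := by rw [← haπ]; exact coe_cw L r
        have h2 := sub_eq_iff_eq_add.mp hc.symm
        rw [antipode, h2, add_comm]
      obtain ⟨-, -, -, hXorL⟩ := hUL
      have hmLS : antipode L ∈ S := hrant ▸ hr
      have hC1L : C1 S L = S := Finset.insert_eq_self.mpr hmLS
      have hQ : TrueLeader (C1 S L) L := by rw [hC1L]; exact hL
      have hnP : ¬ TrueLeader (C0 S L) L := by
        rcases hXorL with ⟨-, hnQ⟩ | ⟨-, hnP⟩
        · exact absurd hQ hnQ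
        · exact hnP
      exact hnP (erase_antipode_leader hL hmLS)
    · -- a > π : λ₂ < λ₁ contradicting leadership
      have hWin := hWhole r hr hrL
      have hlam2M : cw r n₂ ∈ Mset S r := mem_Mset.mpr ⟨n₂, hn₂S, hn₂r, rfl⟩
      obtain ⟨α, hαM, hαle⟩ := win_exists_le hWin hlam2M
      obtain ⟨u, huS, huL, hud⟩ := mem_Mset.mp hαM
      have h3 : cw L n₁ ≤ α := by rw [← hud]; exact h1min u huS huL
      linarith
  · -- k = 1 : a + λ₂ = λ₁ + 3π, impossible
    push_cast at hk
    have hrev : cw r L = 2*π - cw L r := cw_rev hrL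
    have h3 : cw r n₂ ≤ cw r L := h2min L hLS (Ne.symm hrL)
    rw [hrev] at h3
    linarith
end
end

section
/- Let S be a rotationally asymmetric finite set of n ≥ 2 distinct points on a circle with true leader L, and suppose L's leading angle λ(L) is strictly smaller than the leading angle of every other point of S. Then for any point p ∈ S with α(L, p) < π (p strictly on the 'right' of L within angular distance less than π), p can see both L and L's first clockwise neighbor under the π-visibility model, hence p observes an angle strictly smaller than its own leading angle, and therefore p is not the true leader of any configuration consistent with p's view. -/
open Real
open scoped Classical

noncomputable section

/-- The leading angle (clockwise gap to the first clockwise neighbor) of `p` in `S`. -/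
def leadGap (S : Finset Real.Angle) (p : Real.Angle) : ℝ :=
  sInf {d : ℝ | ∃ q ∈ S, q ≠ p ∧ d = cw p q}

namespace Stmt18Aux

lemma cw_nonneg (p q : Real.Angle) : 0 ≤ cw p q := by
  unfold cw; split
  · assumption
  · nlinarith [Real.Angle.neg_pi_lt_toReal (q - p), Real.pi_pos]

lemma cw_eq_zero_iff (p q : Real.Angle) : cw p q = 0 ↔ q = p := by
  constructor
  · intro h
    unfold cw at h
    split at h
    · exact sub_eq_zero.mp (Real.Angle.toReal_eq_zero_iff.mp h)
    · exfalso; nlinarith [Real.Angle.neg_pi_lt_toReal (q - p), Real.pi_pos]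
  · intro h; subst h
    unfold cw
    simp [sub_self, Real.Angle.toReal_zero]

lemma cw_injective (p : Real.Angle) : Function.Injective (cw p) := by
  intro a b hab
  unfold cw at hab
  have h1 := Real.Angle.neg_pi_lt_toReal (a - p)
  have h2 := Real.Angle.neg_pi_lt_toReal (b - p)
  have h3 := Real.Angle.toReal_le_pi (a - p)
  have h4 := Real.Angle.toReal_le_pi (b - p)
  have key : (a - p).toReal = (b - p).toReal := by
    split at hab <;> split at hab <;> first | linarith | nlinarith [Real.pi_pos]
  have h5 : a - p = b - p := Real.Angle.toReal_injective key
  exact sub_left_inj.mp h5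

lemma cw_antipode_eq (L p : Real.Angle) (hne : p ≠ L) (hlt : cw L p < π) :
    cw L (antipode p) = cw L p + π := by
  have hπ := Real.pi_pos
  have ht1 := Real.Angle.neg_pi_lt_toReal (p - L)
  have ht2 := Real.Angle.toReal_le_pi (p - L)
  have hb : 0 ≤ (p - L).toReal := by
    by_contra h
    push_neg at h
    have : cw L p = (p - L).toReal + 2 * π := by unfold cw; rw [if_neg (not_le.mpr h)]
    rw [this] at hlt; linarith
  have hcw : cw L p = (p - L).toReal := by unfold cw; rw [if_pos hb]
  have hpos : 0 < (p - L).toReal := by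
    rcases lt_or_eq_of_le hb with h | h
    · exact h
    · exfalso
      have : cw L p = 0 := by rw [hcw, ← h]
    -- contradiction: cw = 0 means p = L
      exact hne ((cw_eq_zero_iff L p).mp this)
  have hlt' : (p - L).toReal < π := by rwa [hcw] at hlt
  have hcoe : antipode p - L = (((p - L).toReal - π : ℝ) : Real.Angle) := by
    rw [antipode]
    have h1 : p + ↑π - L = (p - L) + ↑π := by abel
    have hring : ((p - L).toReal - π + 2 * π : ℝ) = (p - L).toReal + π := by ring
    calc p + ↑π - L = (p - L) + ↑π := h1
      _ = ((((p - L).toReal : ℝ) : Real.Angle)) + ↑π := by rw [Real.Angle.coe_toReal]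
      _ = (((p - L).toReal + π : ℝ) : Real.Angle) := by rw [Real.Angle.coe_add]
      _ = ((((p - L).toReal - π) + 2 * π : ℝ) : Real.Angle) := by rw [hring]
      _ = (((p - L).toReal - π : ℝ) : Real.Angle) := by
            rw [Real.Angle.coe_add, Real.Angle.coe_two_pi, add_zero]
  have htr : (antipode p - L).toReal = (p - L).toReal - π := by
    rw [hcoe, Real.Angle.toReal_coe_eq_self_iff.mpr ⟨by linarith, by linarith⟩]
  have hneg : ¬ 0 ≤ (antipode p - L).toReal := by rw [htr]; push_neg; linarith
  have hfin : cw L (antipode p) = (antipode p - L).toReal + 2 * π := by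
    unfold cw; rw [if_neg hneg]
  rw [hfin, htr, hcw]
  ring

lemma gapSet_eq (C : Finset Real.Angle) (q : Real.Angle) :
    {d : ℝ | ∃ x ∈ C, x ≠ q ∧ d = cw q x} ⊆ ↑(C.image (cw q)) := by
  rintro d ⟨x, hx, _, rfl⟩
  exact Finset.mem_coe.mpr (Finset.mem_image_of_mem _ hx)

lemma gapSet_bdd (C : Finset Real.Angle) (q : Real.Angle) :
    BddBelow {d : ℝ | ∃ x ∈ C, x ≠ q ∧ d = cw q x} := by
  refine ⟨0, ?_⟩
  rintro d ⟨x, hx, _, rfl⟩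
  exact cw_nonneg q x

lemma leadGap_le (C : Finset Real.Angle) (q x : Real.Angle) (hx : x ∈ C) (hne : x ≠ q) :
    leadGap C q ≤ cw q x :=
  csInf_le (gapSet_bdd C q) ⟨x, hx, hne, rfl⟩

lemma leadGap_mem (C : Finset Real.Angle) (q : Real.Angle)
    (h : ∃ x ∈ C, x ≠ q) : ∃ x ∈ C, x ≠ q ∧ leadGap C q = cw q x := by
  have hfin : ({d : ℝ | ∃ x ∈ C, x ≠ q ∧ d = cw q x}).Finite :=
    Set.Finite.subset (Finset.finite_toSet (C.image (cw q))) (gapSet_eq C q)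
  have hne : ({d : ℝ | ∃ x ∈ C, x ≠ q ∧ d = cw q x}).Nonempty := by
    obtain ⟨x, hx, hxq⟩ := h
    exact ⟨cw q x, x, hx, hxq, rfl⟩
  exact Set.Nonempty.csInf_mem hne hfin

lemma gapSeq_head (C : Finset Real.Angle) (q : Real.Angle) (hq : q ∈ C) (h2 : 2 ≤ C.card) :
    ∃ t, gapSeq C q = leadGap C q :: t := by
  have hlen : 2 ≤ (dists C q).length := by
    rw [dists, Finset.length_sort, Finset.card_image_of_injective _ (cw_injective q)]
    exact h2
  obtain ⟨a, b, rest, hl⟩ : ∃ a b rest, dists C q = a :: b :: rest := by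
    cases h : dists C q with
    | nil => rw [h] at hlen; simp at hlen
    | cons a t => cases t with
      | nil => rw [h] at hlen; simp at hlen
      | cons b rest => exact ⟨a, b, rest, rfl⟩
  have hsort : List.Pairwise (· ≤ ·) (a :: b :: rest) := by
    rw [← hl]; exact Finset.pairwise_sort _ _
  have hnodup : (a :: b :: rest).Nodup := by
    rw [← hl]; exact Finset.sort_nodup _ _
  have hmem : ∀ d : ℝ, d ∈ (a :: b :: rest) ↔ d ∈ C.image (cw q) := by
    intro d; rw [← hl, dists, Finset.mem_sort]
  have hcwqq : cw q q = 0 := (cw_eq_zero_iff q q).mpr rfl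
  have h0mem : (0 : ℝ) ∈ (a :: b :: rest) := by
    rw [hmem]; exact hcwqq ▸ Finset.mem_image_of_mem _ hq
  have hnn : ∀ d ∈ (a :: b :: rest), 0 ≤ d := by
    intro d hd
    rw [hmem] at hd
    obtain ⟨x, _, rfl⟩ := Finset.mem_image.mp hd
    exact cw_nonneg q x
  have ha0 : a = 0 := by
    rcases List.mem_cons.mp h0mem with h | h
    · exact h.symm
    · rcases List.pairwise_cons.mp hsort with ⟨hle, _⟩
      exact le_antisymm (hle 0 h) (hnn a List.mem_cons_self)
  subst ha0
  -- b = leadGap C q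
  have hbmem : b ∈ C.image (cw q) := (hmem b).mp (by simp)
  obtain ⟨xb, hxb, hxbe⟩ := Finset.mem_image.mp hbmem
  have hbne0 : b ≠ 0 := by
    intro h; subst h
    exact (List.nodup_cons.mp hnodup).1 (by simp)
  have hxbq : xb ≠ q := by
    intro h; subst h; exact hbne0 (hxbe ▸ hcwqq ▸ rfl)
  have hble : ∀ d ∈ {d : ℝ | ∃ x ∈ C, x ≠ q ∧ d = cw q x}, b ≤ d := by
    rintro d ⟨x, hx, hxq, rfl⟩
    have hd : cw q x ∈ (0 : ℝ) :: b :: rest := by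
      rw [hmem]; exact Finset.mem_image_of_mem _ hx
    have hdne : cw q x ≠ 0 := by
      intro h; exact hxq ((cw_eq_zero_iff q x).mp h)
    rcases List.mem_cons.mp hd with h | h
    · exact absurd h hdne
    · rcases List.mem_cons.mp h with h | h
      · exact h.ge
      · rcases List.pairwise_cons.mp (List.pairwise_cons.mp hsort).2 with ⟨hle, _⟩
        exact hle _ h
  have hlead : leadGap C q = b := by
    refine le_antisymm ?_ ?_
    · rw [← hxbe]
      exact leadGap_le C q xb hxb hxbq
    · exact le_csInf ⟨cw q xb, xb, hxb, hxbq, rfl⟩ hble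
  refine ⟨List.zipWith (fun a b => a - b) (rest ++ [2 * π]) (b :: rest), ?_⟩
  rw [gapSeq, hl, hlead]
  simp

lemma not_lex_cons {u v : ℝ} {t1 t2 : List ℝ} (h : v < u) :
    ¬ List.Lex (· < ·) (u :: t1) (v :: t2) := by
  intro hx
  cases hx with
  | cons _ => exact lt_irrefl _ h
  | rel h' => exact lt_irrefl _ (h.trans h')

lemma not_trueLeader_of_lt (C : Finset Real.Angle) (q M : Real.Angle) (h2 : 2 ≤ C.card)
    (hq : q ∈ C) (hM : M ∈ C) (hne : M ≠ q) (hlt : leadGap C M < leadGap C q) :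
    ¬ TrueLeader C q := by
  intro hT
  obtain ⟨t1, h1⟩ := gapSeq_head C q hq h2
  obtain ⟨t2, h2'⟩ := gapSeq_head C M hM h2
  have hx := hT.2 M hM hne
  rw [lexLt, h1, h2'] at hx
  exact not_lex_cons hlt hx

end Stmt18Aux
theorem stmt18 (S : Finset Real.Angle) (h2 : 2 ≤ S.card) (hasym : RotAsym S)
    (L : Real.Angle) (hL : TrueLeader S L)
    (hstrict : ∀ r ∈ S, r ≠ L → leadGap S L < leadGap S r)
    (p : Real.Angle) (hp : p ∈ S) (hpL : p ≠ L) (hlt : cw L p < Real.pi) :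
    (RotAsym (C0 S p) → ¬ TrueLeader (C0 S p) p) ∧
    (RotAsym (C1 S p) → ¬ TrueLeader (C1 S p) p) := by
  classical
  have hπ := Real.pi_pos
  have hLmem : L ∈ S := hL.1
  have hap : cw L (antipode p) = cw L p + Real.pi :=
    Stmt18Aux.cw_antipode_eq L p hpL hlt
  have hcw_pos : 0 ≤ cw L p := Stmt18Aux.cw_nonneg L p
  have hap_gt : Real.pi < cw L (antipode p) := by
    rw [hap]
    have : cw L p ≠ 0 := fun h => hpL ((Stmt18Aux.cw_eq_zero_iff L p).mp h)
    have : 0 < cw L p := lt_of_le_of_ne hcw_pos (Ne.symm this)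
    linarith
  have hap_ne_L : antipode p ≠ L := by
    intro h
    have h0 : cw L (antipode p) = 0 := (Stmt18Aux.cw_eq_zero_iff L (antipode p)).mpr h
    rw [h0] at hap_gt; linarith
  have hcwpap : cw p (antipode p) = Real.pi := by
    unfold cw antipode
    rw [add_sub_cancel_left, Real.Angle.toReal_pi, if_pos (le_of_lt hπ)]
  have hap_ne_p : antipode p ≠ p := by
    intro h
    have h0 : cw p (antipode p) = 0 := (Stmt18Aux.cw_eq_zero_iff p (antipode p)).mpr h
    rw [h0] at hcwpap; linarith
  have hm_le : leadGap S L ≤ cw L p := Stmt18Aux.leadGap_le S L p hp hpL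
  have hm_lt_pi : leadGap S L < Real.pi := lt_of_le_of_lt hm_le hlt
  obtain ⟨x0, hx0S, hx0L, hx0e⟩ := Stmt18Aux.leadGap_mem S L ⟨p, hp, hpL⟩
  have hx0_ne_ap : x0 ≠ antipode p := by
    intro h
    rw [h] at hx0e
    rw [← hx0e] at hap_gt
    linarith
  constructor
  · intro _
    have hpC0 : p ∈ C0 S p := Finset.mem_erase.mpr ⟨Ne.symm hap_ne_p, hp⟩
    have hLC0 : L ∈ C0 S p := Finset.mem_erase.mpr ⟨Ne.symm hap_ne_L, hLmem⟩
    have hcard : 2 ≤ (C0 S p).card :=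
      Finset.one_lt_card.mpr ⟨L, hLC0, p, hpC0, Ne.symm hpL⟩
    have hx0C0 : x0 ∈ C0 S p := Finset.mem_erase.mpr ⟨hx0_ne_ap, hx0S⟩
    have hLle : leadGap (C0 S p) L ≤ leadGap S L := by
      rw [hx0e]; exact Stmt18Aux.leadGap_le _ L x0 hx0C0 hx0L
    have hpgt : leadGap S L < leadGap (C0 S p) p := by
      obtain ⟨y, hyC, hyp, hye⟩ :=
        Stmt18Aux.leadGap_mem (C0 S p) p ⟨L, hLC0, Ne.symm hpL⟩
      have hyS : y ∈ S := Finset.mem_of_mem_erase hyC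
      have hs := hstrict p hp hpL
      have h2' : leadGap S p ≤ cw p y := Stmt18Aux.leadGap_le S p y hyS hyp
      rw [hye]; linarith
    exact Stmt18Aux.not_trueLeader_of_lt _ p L hcard hpC0 hLC0 (Ne.symm hpL)
      (lt_of_le_of_lt hLle hpgt)
  · intro _
    have hpC1 : p ∈ C1 S p := Finset.mem_insert_of_mem hp
    have hLC1 : L ∈ C1 S p := Finset.mem_insert_of_mem hLmem
    have hcard : 2 ≤ (C1 S p).card :=
      le_trans h2 (Finset.card_le_card (Finset.subset_insert _ _))
    have hx0C1 : x0 ∈ C1 S p := Finset.mem_insert_of_mem hx0S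
    have hLle : leadGap (C1 S p) L ≤ leadGap S L := by
      rw [hx0e]; exact Stmt18Aux.leadGap_le _ L x0 hx0C1 hx0L
    have hpgt : leadGap S L < leadGap (C1 S p) p := by
      obtain ⟨y, hyC, hyp, hye⟩ :=
        Stmt18Aux.leadGap_mem (C1 S p) p ⟨L, hLC1, Ne.symm hpL⟩
      rw [hye]
      rcases Finset.mem_insert.mp hyC with h | hyS
      · rw [h, hcwpap]; exact hm_lt_pi
      · have hs := hstrict p hp hpL
        have h2' : leadGap S p ≤ cw p y := Stmt18Aux.leadGap_le S p y hyS hyp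
        linarith
    exact Stmt18Aux.not_trueLeader_of_lt _ p L hcard hpC1 hLC1 (Ne.symm hpL)
      (lt_of_le_of_lt hLle hpgt)
end
end
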